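/- Let T > 0 and let m, v0, c be real numbers. Consider the complex polynomial p(ω) = T(ω + m v0)² + i(ω + m v0) − i c m in the complex variable ω, arising from the linearization of Phillips' second-order traffic model about an equilibrium state (with c = k0·η'(k0) and m the wavenumber of a monochromatic perturbation e^{i(mx − ωt)}). Then p has a complex root ω with Im(ω) ≥ 0; moreover, if c·m ≠ 0, then p has a complex root ω with Im(ω) > 0. In particular Phillips' model is never linearly stable, since stability requires every root to have strictly negative imaginary part. -/

import Mathlib

lemma phillips_aux (T m c : ℝ) (hT : 0 < T) :
    ∃ b : ℝ, 1 ≤ b ∧ (c * m ≠ 0 → 1 < b) ∧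
    ∃ a : ℝ, ((a : ℂ) + (b : ℝ) * Complex.I) ^ 2 = -1 + 4 * T * c * m * Complex.I := by
  set r : ℝ := Real.sqrt (1 + 16 * T ^ 2 * c ^ 2 * m ^ 2) with hr
  have hr1 : 1 ≤ r := by
    rw [hr]
    have := Real.sqrt_le_sqrt (show (1:ℝ) ≤ 1 + 16 * T ^ 2 * c ^ 2 * m ^ 2 by nlinarith [sq_nonneg (T*c*m)])
    simpa using this
  have hrsq : r ^ 2 = 1 + 16 * T ^ 2 * c ^ 2 * m ^ 2 := by
    rw [hr, Real.sq_sqrt (by positivity)]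
  set b : ℝ := Real.sqrt ((r + 1) / 2) with hb
  have hbsq : b ^ 2 = (r + 1) / 2 := by
    rw [hb, Real.sq_sqrt]; linarith
  have hb1 : 1 ≤ b := by
    nlinarith [Real.sqrt_nonneg ((r + 1) / 2)]
  have hbpos : (0:ℝ) < b := lt_of_lt_of_le one_pos hb1
  refine ⟨b, hb1, ?_, 2 * T * c * m / b, ?_⟩
  · intro hcm
    have hcm2 : 0 < (c * m) ^ 2 := by positivity
    have h16 : 0 < 16 * T ^ 2 * c ^ 2 * m ^ 2 := by nlinarith [mul_pos (pow_pos hT 2) hcm2]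
    have hr1' : 1 < r := by nlinarith [sq_nonneg (r - 1), sq_nonneg (r + 1)]
    nlinarith
  · have ha2 : (2 * T * c * m / b) ^ 2 - b ^ 2 = -1 := by
      have hb0 : b ≠ 0 := ne_of_gt hbpos
      field_simp
      nlinarith
    have hab : 2 * (2 * T * c * m / b) * b = 4 * T * c * m := by
      field_simp; ring
    apply Complex.ext <;> simp [pow_two, Complex.add_re, Complex.add_im,
      Complex.mul_re, Complex.mul_im] <;> nlinarith

theorem phillips_linearly_unstable (T m v0 c : ℝ) (hT : 0 < T) :
    (∃ ω : ℂ, (T : ℂ) * (ω + (m : ℂ) * (v0 : ℂ)) ^ 2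
        + Complex.I * (ω + (m : ℂ) * (v0 : ℂ)) - Complex.I * (c : ℂ) * (m : ℂ) = 0
      ∧ 0 ≤ ω.im) ∧
    (c * m ≠ 0 →
      ∃ ω : ℂ, (T : ℂ) * (ω + (m : ℂ) * (v0 : ℂ)) ^ 2
          + Complex.I * (ω + (m : ℂ) * (v0 : ℂ)) - Complex.I * (c : ℂ) * (m : ℂ) = 0
        ∧ 0 < ω.im) := by
  obtain ⟨b, hb1, hbstrict, a, hw⟩ := phillips_aux T m c hT
  have hT0 : (T : ℂ) ≠ 0 := by exact_mod_cast ne_of_gt hT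
  set ω : ℂ := -((m : ℂ) * (v0 : ℂ)) + ((a : ℂ) + (b : ℝ) * Complex.I - Complex.I) / (2 * T)
    with hω
  have hroot : (T : ℂ) * (ω + (m : ℂ) * (v0 : ℂ)) ^ 2
      + Complex.I * (ω + (m : ℂ) * (v0 : ℂ)) - Complex.I * (c : ℂ) * (m : ℂ) = 0 := by
    have hz : ω + (m : ℂ) * (v0 : ℂ)
        = ((a : ℂ) + (b : ℝ) * Complex.I - Complex.I) / (2 * T) := by
      rw [hω]; ring
    rw [hz]
    field_simp
    linear_combination hw - Complex.I_sq
  have him : ω.im = (b - 1) / (2 * T) := by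
    rw [hω]
    simp [Complex.add_im, Complex.div_im, Complex.sub_im, Complex.mul_im,
      Complex.mul_re, Complex.normSq]
    field_simp
  constructor
  · exact ⟨ω, hroot, by
      rw [him]; exact div_nonneg (by linarith) (by linarith)⟩
  · intro hcm
    refine ⟨ω, hroot, ?_⟩
    rw [him]
    have := hbstrict hcm
    exact div_pos (by linarith) (by linarith)
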